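/- (Vertically split cumulant sum factors the moments.) Let (A, φ) be a non-commutative probability space, let Z_1,…,Z_n ∈ A, and let χ : {1,…,n} → {ℓ,r} with χ⁻¹({ℓ}) = {i_1 < i_2 < ⋯ < i_k} and χ⁻¹({r}) = {j_1 < j_2 < ⋯ < j_m}. Then Σ_{π ∈ BNC_vs(χ)} κ_π(Z_1,…,Z_n) = φ(Z_{i_1} Z_{i_2} ⋯ Z_{i_k})·φ(Z_{j_1} Z_{j_2} ⋯ Z_{j_m}), with the convention that φ of an empty product equals 1. -/
import Mathlib


open Finset

namespace BiFreeNL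

open scoped Classical

/-- `i` and `j` lie in a common block of `P`. -/
def SameBlock {n : ℕ} (P : Finset (Finset (Fin n))) (i j : Fin n) : Prop :=
  ∃ V ∈ P, i ∈ V ∧ j ∈ V

/-- `P` is a partition of `{1, …, n}` (blocks are nonempty, and every point lies in a
unique block). -/
def IsPartition {n : ℕ} (P : Finset (Finset (Fin n))) : Prop :=
  (∀ V ∈ P, V.Nonempty) ∧ ∀ i : Fin n, ∃! V : Finset (Fin n), V ∈ P ∧ i ∈ V

/-- `P` refines `Q` : every block of `P` is contained in a block of `Q`. -/
def Refines {n : ℕ} (P Q : Finset (Finset (Fin n))) : Prop :=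
  ∀ V ∈ P, ∃ W ∈ Q, V ⊆ W

/-- The rank of `i` in the total order `≺_χ`, which reads the left indices
(`χ = true`) in increasing order followed by the right indices (`χ = false`) in
decreasing order.  This is `s_χ⁻¹`. -/
def chiRank {n : ℕ} (χ : Fin n → Bool) (i : Fin n) : ℕ :=
  if χ i = true then ((univ : Finset (Fin n)).filter fun j => χ j = true ∧ j < i).card
  else ((univ : Finset (Fin n)).filter fun j => χ j = true).card
    + ((univ : Finset (Fin n)).filter fun j => χ j = false ∧ i < j).card

/-- `P` is a bi-non-crossing partition with respect to `χ`, i.e. `s_χ⁻¹ · P` is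
non-crossing; equivalently no two distinct blocks cross with respect to `≺_χ`. -/
def IsBiNonCrossing {n : ℕ} (χ : Fin n → Bool) (P : Finset (Finset (Fin n))) : Prop :=
  IsPartition P ∧
    ∀ u₁ v₁ u₂ v₂ : Fin n,
      chiRank χ u₁ < chiRank χ v₁ → chiRank χ v₁ < chiRank χ u₂ →
        chiRank χ u₂ < chiRank χ v₂ →
        SameBlock P u₁ u₂ → SameBlock P v₁ v₂ → SameBlock P u₁ v₁

/-- The (finite) set `BNC(χ)` of bi-non-crossing partitions with respect to `χ`. -/
noncomputable def BNC {n : ℕ} (χ : Fin n → Bool) : Finset (Finset (Finset (Fin n))) :=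
  Finset.univ.filter fun P => IsBiNonCrossing χ P

/-- The maximal element `1_χ` of `BNC(χ)` : the partition with a single block. -/
def onePart (n : ℕ) : Finset (Finset (Fin n)) := {(Finset.univ : Finset (Fin n))}

/-- `μ` is the Möbius function of the lattice `BNC(χ)` : it vanishes off the
refinement order, and satisfies the two defining convolution identities. -/
def IsMoebius {n : ℕ} (χ : Fin n → Bool)
    (μ : Finset (Finset (Fin n)) → Finset (Finset (Fin n)) → ℂ) : Prop :=
  (∀ P Q, ¬ Refines P Q → μ P Q = 0) ∧
  (∀ P Q, P ∈ BNC χ → Q ∈ BNC χ → Refines P Q →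
    (∑ t ∈ (BNC χ).filter fun t => Refines P t ∧ Refines t Q, μ t Q)
      = if P = Q then 1 else 0) ∧
  (∀ P Q, P ∈ BNC χ → Q ∈ BNC χ → Refines P Q →
    (∑ t ∈ (BNC χ).filter fun t => Refines P t ∧ Refines t Q, μ P t)
      = if P = Q then 1 else 0)

/-- A family of Möbius functions, one for each `n` and `χ`. -/
def MoebiusFamily : Type :=
  ∀ n : ℕ, (Fin n → Bool) → Finset (Finset (Fin n)) → Finset (Finset (Fin n)) → ℂ

variable {A : Type*} [Ring A] [Algebra ℂ A]

/-- `φ_π(Z_1, …, Z_n) = ∏_{V ∈ π} φ(Z_{k_1} ⋯ Z_{k_m})`, the product over the blocks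
`V = {k_1 < ⋯ < k_m}` of `π` of the moments along the blocks. -/
noncomputable def phiPart {n : ℕ} (φ : A →ₗ[ℂ] ℂ) (Z : Fin n → A)
    (P : Finset (Finset (Fin n))) : ℂ :=
  ∏ V ∈ P, φ ((V.sort (· ≤ ·)).map Z).prod

/-- The `(ℓ, r)`-cumulant `κ_P(Z_1, …, Z_n) = ∑_{σ ∈ BNC(χ), σ ≤ P} φ_σ(Z) μ(σ, P)`. -/
noncomputable def cumulant {n : ℕ} (φ : A →ₗ[ℂ] ℂ) (χ : Fin n → Bool)
    (μ : Finset (Finset (Fin n)) → Finset (Finset (Fin n)) → ℂ)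
    (P : Finset (Finset (Fin n))) (Z : Fin n → A) : ℂ :=
  ∑ σ ∈ (BNC χ).filter fun σ => Refines σ P, phiPart φ Z σ * μ σ P


/-- The vertically split bi-non-crossing partitions: every block lies entirely on the
left or entirely on the right. -/
noncomputable def BNCvs {n : ℕ} (χ : Fin n → Bool) : Finset (Finset (Finset (Fin n))) :=
  (BNC χ).filter fun P => ∀ V ∈ P, (∀ i ∈ V, χ i = true) ∨ (∀ i ∈ V, χ i = false)

end BiFreeNL

open BiFreeNL Finset

section Aux

open scoped Classical

variable {n : ℕ} (χ : Fin n → Bool)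

/-- The left side. -/
noncomputable def leftSet : Finset (Fin n) :=
  (univ : Finset (Fin n)).filter fun i => χ i = true

/-- The right side. -/
noncomputable def rightSet : Finset (Fin n) :=
  (univ : Finset (Fin n)).filter fun i => χ i = false

/-- The maximal vertically split partition `{L, R}` (empty blocks removed). -/
noncomputable def piLR : Finset (Finset (Fin n)) :=
  ({leftSet χ, rightSet χ} : Finset (Finset (Fin n))).filter fun V => V.Nonempty

variable {χ}

lemma mem_piLR {V : Finset (Fin n)} :
    V ∈ piLR χ ↔ (V = leftSet χ ∨ V = rightSet χ) ∧ V.Nonempty := by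
  simp [piLR]

lemma refines_refl (P : Finset (Finset (Fin n))) : Refines P P :=
  fun V hV => ⟨V, hV, le_refl _⟩

lemma refines_trans {P Q R : Finset (Finset (Fin n))}
    (h₁ : Refines P Q) (h₂ : Refines Q R) : Refines P R := by
  intro V hV
  obtain ⟨W, hW, hVW⟩ := h₁ V hV
  obtain ⟨X, hX, hWX⟩ := h₂ W hW
  exact ⟨X, hX, hVW.trans hWX⟩

lemma chiRank_lt_iff {i : Fin n} : chiRank χ i < (leftSet χ).card ↔ χ i = true := by
  unfold chiRank leftSet
  cases h : χ i with
  | false =>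
    simp only [h, Bool.false_eq_true, if_false, iff_false]
    omega
  | true =>
    simp only [h, if_true, iff_true]
    apply card_lt_card
    constructor
    · intro j hj
      simp only [mem_filter, mem_univ, true_and] at hj ⊢
      exact hj.1
    · intro hsub
      have := hsub (by simp [h] : i ∈ (univ : Finset (Fin n)).filter fun j => χ j = true)
      simp at this

lemma isPartition_piLR : IsPartition (piLR χ) := by
  constructor
  · intro V hV; exact (mem_piLR.mp hV).2
  · intro i
    cases h : χ i with
    | true =>
      refine ⟨leftSet χ, ⟨mem_piLR.mpr ⟨Or.inl rfl, ⟨i, by simp [leftSet, h]⟩⟩,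
        by simp [leftSet, h]⟩, ?_⟩
      rintro W ⟨hW, hiW⟩
      rcases (mem_piLR.mp hW).1 with rfl | rfl
      · rfl
      · simp [rightSet, h] at hiW
    | false =>
      refine ⟨rightSet χ, ⟨mem_piLR.mpr ⟨Or.inr rfl, ⟨i, by simp [rightSet, h]⟩⟩,
        by simp [rightSet, h]⟩, ?_⟩
      rintro W ⟨hW, hiW⟩
      rcases (mem_piLR.mp hW).1 with rfl | rfl
      · simp [leftSet, h] at hiW
      · rfl

lemma piLR_mem_BNC : piLR χ ∈ BNC χ := by
  simp only [BNC, mem_filter, mem_univ, true_and]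
  refine ⟨isPartition_piLR, ?_⟩
  intro u₁ v₁ u₂ v₂ h₁ h₂ h₃ hu hv
  obtain ⟨V, hV, hu₁, hu₂⟩ := hu
  rcases (mem_piLR.mp hV).1 with rfl | rfl
  · -- common block of u₁, u₂ is leftSet
    have hχu₂ : χ u₂ = true := by simpa [leftSet] using hu₂
    have hv₁ : χ v₁ = true := by
      have : chiRank χ v₁ < (leftSet χ).card :=
        lt_trans h₂ (chiRank_lt_iff.mpr hχu₂)
      exact chiRank_lt_iff.mp this
    exact ⟨leftSet χ, hV, hu₁, by simp [leftSet, hv₁]⟩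
  · -- common block is rightSet
    have hχu₁ : χ u₁ = false := by simpa [rightSet] using hu₁
    have hv₁ : χ v₁ = false := by
      have hr : ¬ chiRank χ v₁ < (leftSet χ).card := by
        have : ¬ chiRank χ u₁ < (leftSet χ).card := by
          intro hlt; have := chiRank_lt_iff.mp hlt; simp [hχu₁] at this
        omega
      have := (not_iff_not.mpr (chiRank_lt_iff (χ := χ) (i := v₁))).mp hr
      simpa using this
    exact ⟨rightSet χ, hV, hu₁, by simp [rightSet, hv₁]⟩

lemma BNCvs_eq : BNCvs χ = (BNC χ).filter fun P => Refines P (piLR χ) := by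
  unfold BNCvs
  ext P
  simp only [mem_filter, and_congr_right_iff]
  intro hP
  have hpart : IsPartition P := by
    simp only [BNC, mem_filter, mem_univ, true_and] at hP
    exact hP.1
  constructor
  · intro h V hV
    rcases h V hV with hL | hR
    · refine ⟨leftSet χ, ?_, ?_⟩
      · obtain ⟨i, hi⟩ := hpart.1 V hV
        exact mem_piLR.mpr ⟨Or.inl rfl, ⟨i, by simp [leftSet, hL i hi]⟩⟩
      · intro i hi; simp [leftSet, hL i hi]
    · refine ⟨rightSet χ, ?_, ?_⟩
      · obtain ⟨i, hi⟩ := hpart.1 V hV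
        exact mem_piLR.mpr ⟨Or.inr rfl, ⟨i, by simp [rightSet, hR i hi]⟩⟩
      · intro i hi; simp [rightSet, hR i hi]
  · intro h V hV
    obtain ⟨W, hW, hVW⟩ := h V hV
    rcases (mem_piLR.mp hW).1 with rfl | rfl
    · exact Or.inl fun i hi => by simpa [leftSet] using hVW hi
    · exact Or.inr fun i hi => by simpa [rightSet] using hVW hi

end Aux

open scoped Classical in
/-- **Vertically split cumulant sum factors the moments.** -/
theorem vs_cumulant_sum_factors
    {A : Type*} [Ring A] [Algebra ℂ A]
    (φ : A →ₗ[ℂ] ℂ) (hφ : φ 1 = 1)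
    (μ : MoebiusFamily) (hμ : ∀ (m : ℕ) (χ : Fin m → Bool), IsMoebius χ (μ m χ))
    (n : ℕ) (Z : Fin n → A) (χ : Fin n → Bool) :
    (∑ π ∈ BNCvs χ, cumulant φ χ (μ n χ) π Z)
      = φ ((((univ : Finset (Fin n)).filter fun i => χ i = true).sort (· ≤ ·)).map Z).prod
        * φ ((((univ : Finset (Fin n)).filter fun i => χ i = false).sort (· ≤ ·)).map Z).prod := by
  classical
  have hM := hμ n χ
  -- Step 1: swap the order of summation.
  have step1 : (∑ π ∈ BNCvs χ, cumulant φ χ (μ n χ) π Z)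
      = ∑ σ ∈ BNC χ, phiPart φ Z σ *
          ∑ π ∈ (BNC χ).filter (fun π => Refines σ π ∧ Refines π (piLR χ)), μ n χ σ π := by
    rw [BNCvs_eq]
    unfold cumulant
    rw [sum_filter]
    have h1 : ∀ π ∈ BNC χ,
        (if Refines π (piLR χ) then
            ∑ σ ∈ (BNC χ).filter fun σ => Refines σ π, phiPart φ Z σ * μ n χ σ π
          else 0)
        = ∑ σ ∈ BNC χ,
            if Refines σ π ∧ Refines π (piLR χ) then phiPart φ Z σ * μ n χ σ π else 0 := by
      intro π _
      by_cases h : Refines π (piLR χ)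
      · rw [if_pos h, sum_filter]
        exact sum_congr rfl fun σ _ => by simp [h]
      · rw [if_neg h]
        exact (sum_eq_zero fun σ _ => by simp [h]).symm
    rw [sum_congr rfl h1, Finset.sum_comm]
    refine sum_congr rfl fun σ _ => ?_
    rw [mul_sum, sum_filter]
  rw [step1]
  -- Step 2: evaluate the inner sum with the Möbius identity.
  have step2 : ∀ σ ∈ BNC χ,
      (∑ π ∈ (BNC χ).filter (fun π => Refines σ π ∧ Refines π (piLR χ)), μ n χ σ π)
        = if σ = piLR χ then 1 else 0 := by
    intro σ hσ
    by_cases href : Refines σ (piLR χ)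
    · exact hM.2.2 σ (piLR χ) hσ piLR_mem_BNC href
    · have h0 : ((BNC χ).filter fun π => Refines σ π ∧ Refines π (piLR χ)) = ∅ := by
        refine filter_eq_empty_iff.mpr fun π _ h => href (refines_trans h.1 h.2)
      have hne : σ ≠ piLR χ := fun h => href (h ▸ refines_refl _)
      rw [h0, if_neg hne, sum_empty]
  rw [sum_congr rfl fun σ hσ => by rw [step2 σ hσ]]
  simp only [mul_ite, mul_one, mul_zero]
  rw [Finset.sum_ite_eq' (BNC χ) (piLR χ) (phiPart φ Z), if_pos piLR_mem_BNC]
  -- Step 3: compute `φ_{π_LR}`.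
  unfold phiPart
  have hLdef : ((univ : Finset (Fin n)).filter fun i => χ i = true) = leftSet χ := rfl
  have hRdef : ((univ : Finset (Fin n)).filter fun i => χ i = false) = rightSet χ := rfl
  rw [hLdef, hRdef]
  rcases (leftSet χ).eq_empty_or_nonempty with hLe | hLne
  · rcases (rightSet χ).eq_empty_or_nonempty with hRe | hRne
    · have hpi : piLR χ = ∅ := by
        unfold piLR; rw [hLe, hRe]; simp [Finset.filter_singleton]
      rw [hpi, hLe, hRe]
      simp [hφ]
    · have hpi : piLR χ = {rightSet χ} := by
        unfold piLR
        rw [hLe]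
        ext V
        simp only [mem_filter, mem_insert, mem_singleton]
        constructor
        · rintro ⟨rfl | rfl, hne⟩
          · exact absurd hne (by simp)
          · rfl
        · rintro rfl; exact ⟨Or.inr rfl, hRne⟩
      rw [hpi, hLe]
      simp [hφ]
  · rcases (rightSet χ).eq_empty_or_nonempty with hRe | hRne
    · have hpi : piLR χ = {leftSet χ} := by
        unfold piLR
        rw [hRe]
        ext V
        simp only [mem_filter, mem_insert, mem_singleton]
        constructor
        · rintro ⟨rfl | rfl, hne⟩
          · rfl
          · exact absurd hne (by simp)
        · rintro rfl; exact ⟨Or.inl rfl, hLne⟩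
      rw [hpi, hRe]
      simp [hφ]
    · have hne : leftSet χ ≠ rightSet χ := by
        obtain ⟨i, hi⟩ := hLne
        intro h
        have h1 : χ i = true := by simpa [leftSet] using hi
        have h2 : χ i = false := by rw [h] at hi; simpa [rightSet] using hi
        simp [h1] at h2
      have hpi : piLR χ = {leftSet χ, rightSet χ} := by
        unfold piLR
        refine filter_true_of_mem fun V hV => ?_
        rcases mem_insert.mp hV with rfl | hV
        · exact hLne
        · rw [mem_singleton.mp hV]; exact hRne
      rw [hpi, prod_pair hne]
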